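/- Let p₁ ∈ (0,1). Let l_R be a {0,1}-valued process adapted to the filtration (𝓕_i) such that for every i ∈ ℕ, P(l_R(i+1) = 1 ∣ 𝓕_i) ≤ p₁ almost surely (a time-inhomogeneous Markov chain whose transition probabilities into the failure state 1 are bounded by p₁). Then for every ρ_R ∈ (p₁, 1), the series ∑_{k=1}^∞ P( ∑_{i=0}^{k-1} l_R(i) > ρ_R · k ) is finite. -/

import Mathlib

open MeasureTheory Filter Topology

private lemma exists_good_t {p ρ : ℝ} (hp : 0 < p) (hρ : p < ρ) :
    ∃ t : ℝ, 0 < t ∧ (1 - p + p * Real.exp t) * Real.exp (-(ρ * t)) < 1 := by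
  set g : ℝ → ℝ := fun t => (1 - p + p * Real.exp t) * Real.exp (-(ρ * t)) with hgdef
  have hg0 : g 0 = 1 := by simp [hgdef]
  have h1 : HasDerivAt (fun t : ℝ => 1 - p + p * Real.exp t) p 0 := by
    simpa using ((Real.hasDerivAt_exp 0).const_mul p).const_add (1 - p)
  have h2 : HasDerivAt (fun t : ℝ => Real.exp (-(ρ * t))) (-ρ) 0 := by
    have h : HasDerivAt (fun t : ℝ => -(ρ * t)) (-ρ) 0 := by
      exact (((hasDerivAt_id (0 : ℝ)).const_mul ρ).neg).congr_deriv (by simp)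
    simpa using h.exp
  have hD : HasDerivAt g (p - ρ) 0 := by
    have h := h1.mul h2
    norm_num at h
    exact h.congr_deriv (by ring)
  have hslope : Tendsto (slope g 0) (𝓝[>] 0) (𝓝 (p - ρ)) :=
    (hasDerivAt_iff_tendsto_slope.mp hD).mono_left
      (nhdsWithin_mono 0 fun x hx => Set.mem_compl_singleton_iff.mpr (ne_of_gt hx))
  have hev : ∀ᶠ s in 𝓝[>] (0 : ℝ), slope g 0 s < 0 :=
    hslope.eventually (gt_mem_nhds (by linarith))
  obtain ⟨s, hs1, hs2⟩ := (hev.and self_mem_nhdsWithin).exists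
  refine ⟨s, hs2, ?_⟩
  have hslope_eq : slope g 0 s = (g s - g 0) / s := by
    simp [slope_def_field]
  rw [hslope_eq] at hs1
  have hnum : g s - g 0 < 0 := by
    rcases div_neg_iff.mp hs1 with ⟨_, h⟩ | ⟨h, _⟩
    · linarith
    · exact h
  have hlt : g s < 1 := by linarith
  simpa [hgdef] using hlt

private lemma mgf_bound {Ω : Type*} [MeasurableSpace Ω] (μ : Measure Ω) [IsProbabilityMeasure μ]
    (ℱ : Filtration ℕ (inferInstance : MeasurableSpace Ω))
    (p₁ : ℝ) (hp : 0 ≤ p₁) (t : ℝ) (ht : 0 < t)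
    (lR : ℕ → Ω → ℝ)
    (h01 : ∀ i ω, lR i ω = 0 ∨ lR i ω = 1)
    (hadapted : Adapted ℱ lR)
    (hcond : ∀ i, (μ[Set.indicator {ω | lR (i + 1) ω = 1} (fun _ => (1 : ℝ)) | ℱ i])
      ≤ᵐ[μ] fun _ => p₁) :
    ∀ k : ℕ, ∫ ω, Real.exp (t * ∑ i ∈ Finset.range (k + 1), lR i ω) ∂μ
      ≤ Real.exp t * (1 + (Real.exp t - 1) * p₁) ^ k := by
  have hmeas : ∀ i, Measurable (lR i) := fun i =>
    ((hadapted i).mono (ℱ.le i) le_rfl)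
  have hl0 : ∀ i ω, 0 ≤ lR i ω := by
    intro i ω; rcases h01 i ω with h | h <;> simp [h]
  have hl1 : ∀ i ω, lR i ω ≤ 1 := by
    intro i ω; rcases h01 i ω with h | h <;> simp [h]
  have hSmeas : ∀ k : ℕ, Measurable (fun ω => ∑ i ∈ Finset.range k, lR i ω) := by
    intro k; exact Finset.measurable_sum _ fun i _ => hmeas i
  have hSle : ∀ (k : ℕ) ω, ∑ i ∈ Finset.range k, lR i ω ≤ (k : ℝ) := by
    intro k ω
    calc ∑ i ∈ Finset.range k, lR i ω ≤ ∑ i ∈ Finset.range k, (1 : ℝ) :=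
          Finset.sum_le_sum fun i _ => hl1 i ω
      _ = (k : ℝ) := by simp
  have h_int : ∀ k : ℕ, Integrable (fun ω => Real.exp (t * ∑ i ∈ Finset.range k, lR i ω)) μ := by
    intro k
    refine Integrable.mono' (integrable_const (Real.exp (t * k)))
      (((hSmeas k).const_mul t).exp.aestronglyMeasurable) ?_
    filter_upwards with ω
    rw [Real.norm_of_nonneg (Real.exp_nonneg _)]
    exact Real.exp_le_exp.2 (mul_le_mul_of_nonneg_left (hSle k ω) ht.le)
  intro k
  induction k with
  | zero =>
    simp only [pow_zero, mul_one]
    have hb : ∀ ω, Real.exp (t * ∑ i ∈ Finset.range 1, lR i ω) ≤ Real.exp t := by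
      intro ω
      rw [Finset.sum_range_one]
      exact Real.exp_le_exp.2 (by nlinarith [hl1 0 ω, hl0 0 ω])
    calc ∫ ω, Real.exp (t * ∑ i ∈ Finset.range 1, lR i ω) ∂μ
        ≤ ∫ _, Real.exp t ∂μ := integral_mono (h_int 1) (integrable_const _) hb
      _ = Real.exp t := by simp
  | succ k ih =>
    set q : ℝ := 1 + (Real.exp t - 1) * p₁ with hqdef
    set f : Ω → ℝ := fun ω => Real.exp (t * ∑ i ∈ Finset.range (k + 1), lR i ω) with hfdef
    set g : Ω → ℝ := fun ω => Real.exp (t * lR (k + 1) ω) with hgdef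
    have hrw : ∀ ω, Real.exp (t * ∑ i ∈ Finset.range (k + 2), lR i ω) = f ω * g ω := by
      intro ω
      rw [hfdef, hgdef]
      rw [Finset.sum_range_succ, mul_add, Real.exp_add]
    have hindset : MeasurableSet {ω | lR (k + 1) ω = 1} := hmeas (k + 1) (measurableSet_singleton 1)
    have hg_eq : g = fun ω => 1 + (Real.exp t - 1) *
        Set.indicator {ω | lR (k + 1) ω = 1} (fun _ => (1 : ℝ)) ω := by
      funext ω
      rcases h01 (k + 1) ω with h | h
      · have : ω ∉ {ω | lR (k + 1) ω = 1} := by simp [h]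
        simp [hgdef, h, Set.indicator_of_notMem this]
      · simp [hgdef, h, Set.indicator_of_mem (show ω ∈ {ω | lR (k + 1) ω = 1} from h)]
    have hf_meas : StronglyMeasurable[ℱ k] f := by
      apply Continuous.comp_stronglyMeasurable Real.continuous_exp
      apply StronglyMeasurable.const_mul
      apply Finset.stronglyMeasurable_fun_sum
      intro i hi
      exact ((hadapted i).mono (ℱ.mono (by simpa using Nat.lt_succ_iff.mp (Finset.mem_range.mp hi))) le_rfl).stronglyMeasurable
    have hind_int : Integrable (Set.indicator {ω | lR (k + 1) ω = 1} (fun _ => (1 : ℝ))) μ :=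
      (integrable_const (1 : ℝ)).indicator hindset
    have hg_int : Integrable g μ := by
      rw [hg_eq]
      exact (integrable_const (1 : ℝ)).add (hind_int.const_mul _)
    have hfg_int : Integrable (f * g) μ := by
      have : f * g = fun ω => Real.exp (t * ∑ i ∈ Finset.range (k + 2), lR i ω) := by
        funext ω; exact (hrw ω).symm
      rw [this]; exact h_int (k + 2)
    have hmle : (ℱ k : MeasurableSpace Ω) ≤ (inferInstance : MeasurableSpace Ω) := ℱ.le k
    have hpull : μ[f * g | ℱ k] =ᵐ[μ] f * μ[g | ℱ k] :=
      condExp_mul_of_stronglyMeasurable_left hf_meas hfg_int hg_int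
    have hcb : μ[g | ℱ k] ≤ᵐ[μ] fun _ => q := by
      have h1 : μ[g | ℱ k] =ᵐ[μ] (fun _ => (1 : ℝ)) +
          (Real.exp t - 1) • μ[Set.indicator {ω | lR (k + 1) ω = 1} (fun _ => (1 : ℝ)) | ℱ k] := by
        rw [hg_eq]
        have hadd := condExp_add (μ := μ) (m := ℱ k) (integrable_const (1 : ℝ))
          (hind_int.smul (Real.exp t - 1))
        have hsmul := condExp_smul (μ := μ) (m := ℱ k) (Real.exp t - 1)
          (Set.indicator {ω | lR (k + 1) ω = 1} (fun _ => (1 : ℝ)))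
        have hconst := condExp_const hmle (1 : ℝ) (μ := μ)
        calc μ[(fun ω => 1 + (Real.exp t - 1) *
              Set.indicator {ω | lR (k + 1) ω = 1} (fun _ => (1 : ℝ)) ω) | ℱ k]
            = μ[(fun _ => (1 : ℝ)) + (Real.exp t - 1) •
              Set.indicator {ω | lR (k + 1) ω = 1} (fun _ => (1 : ℝ)) | ℱ k] := rfl
          _ =ᵐ[μ] _ := by
              refine hadd.trans ?_
              rw [hconst]
              filter_upwards [hsmul] with ω hω
              simp only [Pi.add_apply]
              rw [hω]
      filter_upwards [h1, hcond k] with ω h1ω h2ω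
      rw [h1ω]
      simp only [Pi.add_apply, Pi.smul_apply, smul_eq_mul]
      have het : (0 : ℝ) ≤ Real.exp t - 1 := by
        linarith [Real.add_one_le_exp t]
      nlinarith [mul_le_mul_of_nonneg_left h2ω het]
    have hf_nonneg : ∀ ω, 0 ≤ f ω := fun ω => Real.exp_nonneg _
    have hf_bdd : ∀ ω, ‖f ω‖ ≤ Real.exp (t * (k + 1)) := by
      intro ω
      rw [Real.norm_of_nonneg (hf_nonneg ω)]
      exact Real.exp_le_exp.2 (mul_le_mul_of_nonneg_left (by simpa using hSle (k + 1) ω) ht.le)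
    have hfc_int : Integrable (f * μ[g | ℱ k]) μ :=
      Integrable.bdd_mul integrable_condExp
        (((hSmeas (k + 1)).const_mul t).exp.aestronglyMeasurable)
        (Eventually.of_forall hf_bdd)
    have hq_nonneg : (0 : ℝ) ≤ q := by
      have h1 : (0 : ℝ) ≤ Real.exp t - 1 := by linarith [Real.add_one_le_exp t]
      have h2 : 0 ≤ (Real.exp t - 1) * p₁ := mul_nonneg h1 hp
      linarith
    calc ∫ ω, Real.exp (t * ∑ i ∈ Finset.range (k + 2), lR i ω) ∂μ
        = ∫ ω, (f * g) ω ∂μ := integral_congr_ae (Eventually.of_forall fun ω => hrw ω)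
      _ = ∫ ω, (μ[f * g | ℱ k]) ω ∂μ := (integral_condExp hmle).symm
      _ = ∫ ω, (f * μ[g | ℱ k]) ω ∂μ := integral_congr_ae hpull
      _ ≤ ∫ ω, f ω * q ∂μ := by
          refine integral_mono_ae hfc_int ((h_int (k + 1)).mul_const q) ?_
          filter_upwards [hcb] with ω hω
          exact mul_le_mul_of_nonneg_left hω (hf_nonneg ω)
      _ = q * ∫ ω, f ω ∂μ := by rw [integral_mul_const]; ring
      _ ≤ q * (Real.exp t * q ^ k) := mul_le_mul_of_nonneg_left ih hq_nonneg
      _ = Real.exp t * q ^ (k + 1) := by ring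

/-- For a {0,1}-valued process adapted to a filtration whose
(conditional) transition probability into the failure state 1 is bounded by
`p₁ ∈ (0,1)`, the tail-probability series `∑ₖ P(∑_{i<k} l_R(i) > ρ_R k)` is
finite for every `ρ_R ∈ (p₁, 1)`. -/
theorem random_loss_tail_summable
    {Ω : Type*} [MeasurableSpace Ω] (μ : Measure Ω) [IsProbabilityMeasure μ]
    (ℱ : Filtration ℕ (inferInstance : MeasurableSpace Ω))
    (p₁ : ℝ) (hp₁ : p₁ ∈ Set.Ioo (0 : ℝ) 1)
    (lR : ℕ → Ω → ℝ)
    (h01 : ∀ i ω, lR i ω = 0 ∨ lR i ω = 1)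
    (hadapted : Adapted ℱ lR)
    (hcond : ∀ i, (μ[Set.indicator {ω | lR (i + 1) ω = 1} (fun _ => (1 : ℝ)) | ℱ i])
      ≤ᵐ[μ] fun _ => p₁)
    (ρR : ℝ) (hρ : ρR ∈ Set.Ioo p₁ 1) :
    (∑' k : ℕ,
      μ {ω | ρR * (k + 1 : ℕ) < ∑ i ∈ Finset.range (k + 1), lR i ω}) < ⊤ := by
  obtain ⟨t, ht, hrlt⟩ := exists_good_t hp₁.1 hρ.1
  have hmgf := mgf_bound μ ℱ p₁ hp₁.1.le t ht lR h01 hadapted hcond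
  set q : ℝ := 1 + (Real.exp t - 1) * p₁ with hqdef
  have hb_pos : 0 < Real.exp (ρR * t) := Real.exp_pos _
  set r : ℝ := q / Real.exp (ρR * t) with hrdef
  set C : ℝ := Real.exp t / Real.exp (ρR * t) with hCdef
  have hq_eq : q = 1 - p₁ + p₁ * Real.exp t := by rw [hqdef]; ring
  have hr_lt1 : r < 1 := by
    rw [hrdef, hq_eq]
    rw [Real.exp_neg, ← div_eq_mul_inv] at hrlt
    exact hrlt
  have hq_nonneg : (0 : ℝ) ≤ q := by
    have h1 : (0 : ℝ) ≤ Real.exp t - 1 := by linarith [Real.add_one_le_exp t]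
    have h2 : 0 ≤ (Real.exp t - 1) * p₁ := mul_nonneg h1 hp₁.1.le
    linarith
  have hr_nonneg : (0 : ℝ) ≤ r := div_nonneg hq_nonneg hb_pos.le
  have hC_nonneg : (0 : ℝ) ≤ C := div_nonneg (Real.exp_pos t).le hb_pos.le
  have hmeas : ∀ i, Measurable (lR i) := fun i => ((hadapted i).mono (ℱ.le i) le_rfl)
  have hSmeas : ∀ k : ℕ, Measurable (fun ω => ∑ i ∈ Finset.range k, lR i ω) := by
    intro k; exact Finset.measurable_sum _ fun i _ => hmeas i
  have hl1 : ∀ i ω, lR i ω ≤ 1 := by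
    intro i ω; rcases h01 i ω with h | h <;> simp [h]
  have hSle : ∀ (k : ℕ) ω, ∑ i ∈ Finset.range k, lR i ω ≤ (k : ℝ) := by
    intro k ω
    calc ∑ i ∈ Finset.range k, lR i ω ≤ ∑ i ∈ Finset.range k, (1 : ℝ) :=
          Finset.sum_le_sum fun i _ => hl1 i ω
      _ = (k : ℝ) := by simp
  have h_int : ∀ k : ℕ, Integrable (fun ω => Real.exp (t * ∑ i ∈ Finset.range k, lR i ω)) μ := by
    intro k
    refine Integrable.mono' (integrable_const (Real.exp (t * k)))
      (((hSmeas k).const_mul t).exp.aestronglyMeasurable) ?_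
    filter_upwards with ω
    rw [Real.norm_of_nonneg (Real.exp_nonneg _)]
    exact Real.exp_le_exp.2 (mul_le_mul_of_nonneg_left (hSle k ω) ht.le)
  have key : ∀ k : ℕ,
      μ {ω | ρR * (k + 1 : ℕ) < ∑ i ∈ Finset.range (k + 1), lR i ω}
        ≤ ENNReal.ofReal (C * r ^ k) := by
    intro k
    set ε : ℝ := Real.exp (t * (ρR * (k + 1 : ℕ))) with hεdef
    have hε_pos : 0 < ε := Real.exp_pos _
    set fk : Ω → ℝ := fun ω => Real.exp (t * ∑ i ∈ Finset.range (k + 1), lR i ω) with hfkdef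
    have hsub : {ω | ρR * (k + 1 : ℕ) < ∑ i ∈ Finset.range (k + 1), lR i ω}
        ⊆ {ω | ε ≤ fk ω} := by
      intro ω hω
      simp only [Set.mem_setOf_eq] at hω ⊢
      exact Real.exp_le_exp.2 (mul_le_mul_of_nonneg_left hω.le ht.le)
    have hmarkov := mul_meas_ge_le_integral_of_nonneg
      (Eventually.of_forall fun ω => Real.exp_nonneg _ : 0 ≤ᵐ[μ] fk) (h_int (k + 1)) ε
    have hfin : μ {ω | ε ≤ fk ω} ≠ ⊤ := measure_ne_top μ _
    have htoReal : (μ {ω | ε ≤ fk ω}).toReal ≤ Real.exp t * q ^ k / ε := by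
      rw [le_div_iff₀ hε_pos]
      calc (μ {ω | ε ≤ fk ω}).toReal * ε = ε * (μ {ω | ε ≤ fk ω}).toReal := by ring
        _ ≤ ∫ ω, fk ω ∂μ := hmarkov
        _ ≤ Real.exp t * q ^ k := hmgf k
    have hval : Real.exp t * q ^ k / ε = C * r ^ k := by
      have hε_eq : ε = Real.exp (ρR * t) * (Real.exp (ρR * t)) ^ k := by
        rw [hεdef, ← pow_succ']
        rw [← Real.exp_nat_mul]
        congr 1
        push_cast
        ring
      rw [hε_eq, hCdef, hrdef, div_pow]
      field_simp
    calc μ {ω | ρR * (k + 1 : ℕ) < ∑ i ∈ Finset.range (k + 1), lR i ω}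
        ≤ μ {ω | ε ≤ fk ω} := measure_mono hsub
      _ = ENNReal.ofReal ((μ {ω | ε ≤ fk ω}).toReal) := (ENNReal.ofReal_toReal hfin).symm
      _ ≤ ENNReal.ofReal (Real.exp t * q ^ k / ε) := ENNReal.ofReal_le_ofReal htoReal
      _ = ENNReal.ofReal (C * r ^ k) := by rw [hval]
  have hsummable : Summable (fun k : ℕ => C * r ^ k) :=
    (summable_geometric_of_lt_one hr_nonneg hr_lt1).mul_left C
  calc (∑' k : ℕ, μ {ω | ρR * (k + 1 : ℕ) < ∑ i ∈ Finset.range (k + 1), lR i ω})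
      ≤ ∑' k : ℕ, ENNReal.ofReal (C * r ^ k) := ENNReal.tsum_le_tsum key
    _ = ENNReal.ofReal (∑' k : ℕ, C * r ^ k) :=
        (ENNReal.ofReal_tsum_of_nonneg (fun k => mul_nonneg hC_nonneg (pow_nonneg hr_nonneg k))
          hsummable).symm
    _ < ⊤ := ENNReal.ofReal_lt_top
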